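/- Under the same setup and bias-mass bound 0 ≤ ε_m ≤ ε < 1, the weighted block estimate satisfies | c_t · E_k[ V̂_{B(t)} ] − E^π_t[r] | ≤ ε/(1−ε), where V̂_{B(t)} = Σ_{m ∈ B(t)} V̂_m is the sum of doubly robust per-sample terms over the t-th block B(t) (all exploration samples processed while simulating step t), each V̂_m being conditionally unbiased for E^π_t[r] given z_{m−1}. -/

import Mathlib

open Finset
open scoped Classical

/-- Second part of Lemma 5.2: the weighted block estimate of DR-ns satisfies
`|c_t · E_k[V̂_{B(t)}] − E^π_t[r]| ≤ ε/(1−ε)`. -/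
theorem stmt13 {X A R : Type*} [Fintype X] [Fintype A] [Fintype R]
    (D : X → ℝ) (pit : X → A → ℝ) (mu : ℕ → X → A → ℝ)
    (Dr : X → A → R → ℝ) (rval : R → ℝ) (rhat : X → A → ℝ) (c ε : ℝ)
    (hD0 : ∀ x, 0 ≤ D x) (hD1 : ∑ x, D x = 1)
    (hpit0 : ∀ x a, 0 ≤ pit x a) (hpit1 : ∀ x, ∑ a, pit x a = 1)
    (hmu0 : ∀ m x a, 0 ≤ mu m x a) (hmu1 : ∀ m x, ∑ a, mu m x a = 1)
    (hmupos : ∀ m x a, 0 < pit x a → 0 < mu m x a)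
    (hDr0 : ∀ x a r, 0 ≤ Dr x a r) (hDr1 : ∀ x a, ∑ r, Dr x a r = 1)
    (hrval0 : ∀ r, 0 ≤ rval r) (hrval1 : ∀ r, rval r ≤ 1)
    (hrhat0 : ∀ x a, 0 ≤ rhat x a) (hrhat1 : ∀ x a, rhat x a ≤ 1)
    (hc : 0 < c) (hc1 : c ≤ 1) (hε : ε < 1)
    (Vhat : ℕ → X → A → R → ℝ)
    (hVhat : ∀ m x a r, Vhat m x a r =
      (∑ a', pit x a' * rhat x a') + (pit x a / mu m x a) * (rval r - rhat x a))
    (Vpi : ℝ) (hVpi : Vpi = ∑ x, ∑ a, ∑ r, D x * (pit x a * (Dr x a r * rval r)))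
    -- conditional unbiasedness of each per-sample DR term (perfect logging)
    (hunbiased : ∀ m,
      ∑ x, ∑ a, ∑ r, D x * (mu m x a * (Dr x a r * Vhat m x a r)) = Vpi)
    (Am : ℕ → ℝ)
    (hAm : ∀ m, Am m = ∑ x, ∑ a, D x * min (mu m x a) (c * pit x a))
    (eps : ℕ → ℝ)
    (heps : ∀ m, eps m =
      (∑ x, ∑ a, if c * pit x a > mu m x a then D x * pit x a else 0)
        - (∑ x, ∑ a, if c * pit x a > mu m x a then D x * mu m x a else 0) / c)
    (hepsb : ∀ m, 0 ≤ eps m ∧ eps m ≤ ε)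
    (EVB : ℝ)
    (hEVB : EVB = ∑' m : ℕ, (∏ j ∈ Finset.range m, (1 - Am j)) *
      (∑ x, ∑ a, ∑ r, D x * (mu m x a * (Dr x a r * Vhat m x a r)))) :
    |c * EVB - Vpi| ≤ ε / (1 - ε) := by
  have hε0 : 0 ≤ ε := le_trans (hepsb 0).1 (hepsb 0).2
  -- key algebraic identity: Am m = c * (1 - eps m)
  have hA : ∀ m, Am m = c * (1 - eps m) := by
    intro m
    rw [hAm, heps m]
    have hsplit : ∑ x, ∑ a, D x * min (mu m x a) (c * pit x a)
        = c * (∑ x, ∑ a, D x * pit x a)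
          - c * (∑ x, ∑ a, if c * pit x a > mu m x a then D x * pit x a else 0)
          + (∑ x, ∑ a, if c * pit x a > mu m x a then D x * mu m x a else 0) := by
      rw [Finset.mul_sum, Finset.mul_sum, ← Finset.sum_sub_distrib,
        ← Finset.sum_add_distrib]
      refine Finset.sum_congr rfl fun x _ => ?_
      rw [Finset.mul_sum, Finset.mul_sum, ← Finset.sum_sub_distrib,
        ← Finset.sum_add_distrib]
      refine Finset.sum_congr rfl fun a _ => ?_
      split_ifs with h
      · rw [min_eq_left h.le]; ring
      · rw [min_eq_right (not_lt.mp h)]; ring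
    have hone : (∑ x, ∑ a, D x * pit x a) = 1 := by
      simp only [← Finset.mul_sum, hpit1, mul_one]; exact hD1
    rw [hsplit, hone, mul_one]
    field_simp
    ring
  set q : ℝ := 1 - c * (1 - ε) with hqdef
  have hq0 : 0 ≤ q := by nlinarith
  have hq1 : q < 1 := by nlinarith
  have hAm_le : ∀ m, c * (1 - ε) ≤ Am m := fun m => by
    rw [hA m]; nlinarith [(hepsb m).1, (hepsb m).2]
  have hAm_ge : ∀ m, Am m ≤ c := fun m => by
    rw [hA m]; nlinarith [(hepsb m).1]
  have hf0 : ∀ m, 0 ≤ ∏ j ∈ Finset.range m, (1 - Am j) :=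
    fun m => Finset.prod_nonneg fun j _ => by nlinarith [hAm_ge j]
  have hfq : ∀ m, ∏ j ∈ Finset.range m, (1 - Am j) ≤ q ^ m := by
    intro m
    calc ∏ j ∈ Finset.range m, (1 - Am j) ≤ ∏ _j ∈ Finset.range m, q :=
          Finset.prod_le_prod (fun j _ => by nlinarith [hAm_ge j])
            (fun j _ => by nlinarith [hAm_le j])
      _ = q ^ m := by simp
  have hfg : ∀ m, (1 - c) ^ m ≤ ∏ j ∈ Finset.range m, (1 - Am j) := by
    intro m
    calc (1 - c) ^ m = ∏ _j ∈ Finset.range m, (1 - c) := by simp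
      _ ≤ ∏ j ∈ Finset.range m, (1 - Am j) :=
          Finset.prod_le_prod (fun j _ => by linarith)
            (fun j _ => by nlinarith [hAm_ge j])
  have hgeomq : Summable (fun m : ℕ => q ^ m) :=
    summable_geometric_of_lt_one hq0 hq1
  have hgeomc : Summable (fun m : ℕ => (1 - c) ^ m) :=
    summable_geometric_of_lt_one (by linarith) (by linarith)
  have hsumf : Summable (fun m : ℕ => ∏ j ∈ Finset.range m, (1 - Am j)) :=
    Summable.of_nonneg_of_le hf0 hfq hgeomq
  have hEVB' : EVB = (∑' m : ℕ, ∏ j ∈ Finset.range m, (1 - Am j)) * Vpi := by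
    rw [hEVB, ← tsum_mul_right]
    exact tsum_congr fun m => by rw [hunbiased m]
  set S : ℝ := ∑' m : ℕ, ∏ j ∈ Finset.range m, (1 - Am j) with hSdef
  have hSle : S ≤ (1 - q)⁻¹ := by
    rw [← tsum_geometric_of_lt_one hq0 hq1]
    exact Summable.tsum_le_tsum hfq hsumf hgeomq
  have hSge : (1 - (1 - c))⁻¹ ≤ S := by
    rw [← tsum_geometric_of_lt_one (by linarith : (0:ℝ) ≤ 1 - c) (by linarith)]
    exact Summable.tsum_le_tsum hfg hgeomc hsumf
  have h1 : 1 ≤ c * S := by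
    have h := mul_le_mul_of_nonneg_left hSge hc.le
    have hcc : c * (1 - (1 - c))⁻¹ = 1 := by rw [sub_sub_cancel]; exact mul_inv_cancel₀ hc.ne'
    linarith
  have h2 : c * S ≤ (1 - ε)⁻¹ := by
    have h := mul_le_mul_of_nonneg_left hSle hc.le
    have hcc : c * (1 - q)⁻¹ = (1 - ε)⁻¹ := by
      rw [hqdef, show (1 : ℝ) - (1 - c * (1 - ε)) = c * (1 - ε) by ring, mul_inv,
        ← mul_assoc, mul_inv_cancel₀ hc.ne', one_mul]
    linarith
  have hVpi0 : 0 ≤ Vpi := by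
    rw [hVpi]
    refine Finset.sum_nonneg fun x _ => Finset.sum_nonneg fun a _ =>
      Finset.sum_nonneg fun r _ => ?_
    exact mul_nonneg (hD0 x) (mul_nonneg (hpit0 x a)
      (mul_nonneg (hDr0 x a r) (hrval0 r)))
  have hVpi1 : Vpi ≤ 1 := by
    rw [hVpi]
    calc ∑ x, ∑ a, ∑ r, D x * (pit x a * (Dr x a r * rval r))
        ≤ ∑ x, ∑ a, ∑ r, D x * (pit x a * Dr x a r) := by
          refine Finset.sum_le_sum fun x _ => Finset.sum_le_sum fun a _ =>
            Finset.sum_le_sum fun r _ => ?_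
          exact mul_le_mul_of_nonneg_left (mul_le_mul_of_nonneg_left
            (mul_le_of_le_one_right (hDr0 x a r) (hrval1 r)) (hpit0 x a)) (hD0 x)
      _ = 1 := by
          simp only [← Finset.mul_sum, hDr1, mul_one, hpit1]
          exact hD1
  have h1ε : (0:ℝ) < 1 - ε := by linarith
  have hεfrac : ε / (1 - ε) = (1 - ε)⁻¹ - 1 := by
    field_simp
    ring
  rw [hEVB', hεfrac]
  have hnn : 0 ≤ c * (S * Vpi) - Vpi := by
    nlinarith [mul_nonneg hVpi0 (by linarith : (0:ℝ) ≤ c * S - 1)]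
  rw [abs_of_nonneg hnn]
  nlinarith [mul_le_mul_of_nonneg_right hVpi1 (by linarith : (0:ℝ) ≤ c * S - 1)]
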